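/- Let O be a discrete valuation ring with uniformizer π and finite residue field, let O′ be a commutative O-algebra that is free of rank d ≥ 1 as an O-module, let r ≥ 1, and let T : O^n → O^n be an injective O-linear map. For an O-algebra R, let T_R : R^n → R^n denote the map obtained from T by base change. Then the kernel and cokernel of T_{O/π^r O} are finite of equal cardinality N, and the kernel and cokernel of T_{O′/π^r O′} are finite of equal cardinality N^d. -/

import Mathlib

open Ideal Submodule

/-- The base change of an `O`-linear endomorphism of `O^n` to an `O`-algebra `R`,
realized on `R^n` via the corresponding matrix. -/
noncomputable def baseChangeMap (O : Type) [CommRing O] (R : Type) [CommRing R]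
    [Algebra O R] (n : ℕ) (T : (Fin n → O) →ₗ[O] (Fin n → O)) :
    (Fin n → R) →ₗ[R] (Fin n → R) :=
  Matrix.toLin' ((LinearMap.toMatrix' T).map (algebraMap O R))

section Counting

/-- For an endomorphism of a finite module, kernel and cokernel have the same cardinality. -/
theorem aux_card_ker_coker {O M : Type} [CommRing O] [AddCommGroup M] [Module O M] [Finite M]
    (f : M →ₗ[O] M) :
    Nat.card (LinearMap.ker f) = Nat.card (M ⧸ LinearMap.range f) := by
  have h1 := Submodule.card_eq_card_quotient_mul_card (LinearMap.ker f)
  have h2 := Submodule.card_eq_card_quotient_mul_card (LinearMap.range f)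
  have h3 : Nat.card (M ⧸ LinearMap.ker f) = Nat.card (LinearMap.range f) :=
    Nat.card_congr f.quotKerEquivRange.toEquiv
  haveI : Nonempty (LinearMap.range f) := ⟨0⟩
  have hpos : 0 < Nat.card (LinearMap.range f) := Nat.card_pos
  rw [h3] at h1
  refine Nat.eq_of_mul_eq_mul_right hpos ?_
  calc Nat.card (LinearMap.ker f) * Nat.card (LinearMap.range f)
      = Nat.card M := h1.symm
    _ = Nat.card (LinearMap.range f) * Nat.card ((M ⧸ LinearMap.range f)) := h2
    _ = Nat.card ((M ⧸ LinearMap.range f)) * Nat.card (LinearMap.range f) := mul_comm _ _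

end Counting

section FiniteQuot

/-- A DVR with finite residue field has finite quotients by powers of the uniformizer. -/
theorem aux_finite_quot (O : Type) [CommRing O] [IsDomain O] [IsDiscreteValuationRing O]
    [Finite (IsLocalRing.ResidueField O)] (π : O) (hπ : Irreducible π) (r : ℕ) :
    Finite (O ⧸ Ideal.span {π ^ r}) := by
  have hk : Finite (O ⧸ Ideal.span ({π} : Set O)) := by
    rw [← hπ.maximalIdeal_eq]
    exact ‹Finite (IsLocalRing.ResidueField O)›
  induction r with
  | zero =>
    have : Ideal.span ({π ^ 0} : Set O) = ⊤ := by
      simp [Ideal.span_singleton_one]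
    haveI : Subsingleton (O ⧸ Ideal.span ({π ^ 0} : Set O)) := by
      rw [this]
      infer_instance
    exact Finite.of_subsingleton
  | succ r ih =>
    set I1 : Ideal O := Ideal.span {π ^ (r + 1)} with hI1
    set I0 : Ideal O := Ideal.span {π ^ r} with hI0
    have hle : I1 ≤ I0 :=
      Ideal.span_singleton_le_span_singleton.mpr ⟨π, pow_succ π r⟩
    set g : O ⧸ I1 →+* O ⧸ I0 := Ideal.Quotient.factor hle with hg
    set g' : (O ⧸ I1) →+ (O ⧸ I0) := g.toAddMonoidHom with hg'
    have hsurj : Function.Surjective g' := by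
      intro y
      obtain ⟨a, rfl⟩ := Ideal.Quotient.mk_surjective y
      exact ⟨Ideal.Quotient.mk I1 a, Ideal.Quotient.factor_mk hle a⟩
    -- the kernel of g' is finite
    have hmem : ∀ a : O, Ideal.Quotient.mk I1 (a * π ^ r) ∈ g'.ker := by
      intro a
      rw [AddMonoidHom.mem_ker]
      show g (Ideal.Quotient.mk I1 (a * π ^ r)) = 0
      rw [Ideal.Quotient.factor_mk, Ideal.Quotient.eq_zero_iff_mem]
      exact Ideal.mem_span_singleton'.mpr ⟨a, rfl⟩
    set u : O → g'.ker := fun a => ⟨Ideal.Quotient.mk I1 (a * π ^ r), hmem a⟩ with hu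
    have hucongr : ∀ a b : O, a - b ∈ Ideal.span ({π} : Set O) → u a = u b := by
      intro a b hab
      obtain ⟨x, hx⟩ := Ideal.mem_span_singleton'.mp hab
      apply Subtype.ext
      show Ideal.Quotient.mk I1 (a * π ^ r) = Ideal.Quotient.mk I1 (b * π ^ r)
      rw [Ideal.Quotient.mk_eq_mk_iff_sub_mem]
      have : a * π ^ r - b * π ^ r = x * π ^ (r + 1) := by
        rw [← sub_mul, ← hx, pow_succ]
        ring
      rw [this]
      exact Ideal.mem_span_singleton'.mpr ⟨x, rfl⟩
    have hkerfin : Finite g'.ker := by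
      refine Finite.of_surjective
        (fun x : O ⧸ Ideal.span ({π} : Set O) => u x.out) ?_
      rintro ⟨y, hy⟩
      obtain ⟨a', rfl⟩ := Ideal.Quotient.mk_surjective y
      have ha' : a' ∈ I0 := by
        rw [AddMonoidHom.mem_ker] at hy
        have : g (Ideal.Quotient.mk I1 a') = 0 := hy
        rwa [Ideal.Quotient.factor_mk, Ideal.Quotient.eq_zero_iff_mem] at this
      obtain ⟨a, ha⟩ := Ideal.mem_span_singleton'.mp ha'
      refine ⟨Ideal.Quotient.mk (Ideal.span ({π} : Set O)) a, ?_⟩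
      have hout : ((Ideal.Quotient.mk (Ideal.span ({π} : Set O)) a : O ⧸ _)).out - a ∈
          Ideal.span ({π} : Set O) := by
        rw [← Ideal.Quotient.mk_eq_mk_iff_sub_mem]
        exact Quotient.out_eq' _
      show u (Ideal.Quotient.mk (Ideal.span ({π} : Set O)) a).out =
        (⟨Ideal.Quotient.mk I1 a', hy⟩ : g'.ker)
      rw [hucongr _ a hout]
      apply Subtype.ext
      show Ideal.Quotient.mk I1 (a * π ^ r) = Ideal.Quotient.mk I1 a'
      rw [ha]
    have hquotfin : Finite ((O ⧸ I1) ⧸ g'.ker) :=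
      Finite.of_equiv _ (QuotientAddGroup.quotientKerEquivOfSurjective g' hsurj).toEquiv.symm
    exact Finite.of_equiv _ (AddSubgroup.addGroupEquivQuotientProdAddSubgroup (s := g'.ker)).symm

end FiniteQuot

section BaseChange

variable {O : Type} [CommRing O] {A : Type} [CommRing A] [Algebra O A] {d : ℕ}

/-- The quotient of a free `O`-algebra by (the ideal generated by the image of) `c`
is `O`-linearly the `d`-fold product of `O ⧸ (c)`. -/
noncomputable def psiEquiv (b : Module.Basis (Fin d) O A) (c : O) :
    (A ⧸ Ideal.span {algebraMap O A c}) ≃ₗ[O] (Fin d → O ⧸ Ideal.span ({c} : Set O)) := by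
  classical
  have hmap : ((Ideal.span {algebraMap O A c}).restrictScalars O).map
        (b.equivFun : A →ₗ[O] (Fin d → O)) =
      Submodule.pi Set.univ (fun _ : Fin d => (Ideal.span ({c} : Set O) : Submodule O O)) := by
    ext v
    simp only [Submodule.mem_map, Submodule.restrictScalars_mem, Submodule.mem_pi,
      Set.mem_univ, forall_true_left]
    constructor
    · rintro ⟨x, hx, rfl⟩ i
      obtain ⟨y, rfl⟩ := Ideal.mem_span_singleton'.mp hx
      have h1 : y * algebraMap O A c = c • y := by rw [Algebra.smul_def, mul_comm]
      rw [h1, map_smul]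
      refine Ideal.mem_span_singleton'.mpr ⟨(b.equivFun : A →ₗ[O] (Fin d → O)) y i, ?_⟩
      rw [Pi.smul_apply, smul_eq_mul, mul_comm]
    · intro hv
      choose w hw using fun i => Ideal.mem_span_singleton'.mp (hv i)
      have hv' : v = c • w := by
        funext i
        rw [Pi.smul_apply, smul_eq_mul, mul_comm, hw i]
      refine ⟨b.equivFun.symm v, ?_, LinearEquiv.apply_symm_apply _ _⟩
      rw [hv', map_smul]
      refine Ideal.mem_span_singleton'.mpr ⟨b.equivFun.symm w, ?_⟩
      rw [mul_comm, ← Algebra.smul_def]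
  exact ((Submodule.Quotient.restrictScalarsEquiv O (Ideal.span {algebraMap O A c})).symm).trans
    ((Submodule.Quotient.equiv _ _ b.equivFun hmap).trans
      (Submodule.quotientPi _))

/-- Transposition of a double product, as a linear equivalence. -/
def swapLinearEquiv (n : ℕ) (Q : Type) [AddCommGroup Q] [Module O Q] :
    (Fin n → Fin d → Q) ≃ₗ[O] (Fin d → Fin n → Q) where
  toFun v := fun j i => v i j
  invFun w := fun i j => w j i
  map_add' _ _ := rfl
  map_smul' _ _ := rfl
  left_inv _ := rfl
  right_inv _ := rfl

end BaseChange
section BaseChange2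

variable {O : Type} [CommRing O] {A : Type} [CommRing A] [Algebra O A] {d : ℕ}

/-- The product-of-copies decomposition of `(A ⧸ cA)^n`, transposed. -/
noncomputable def PhiEquiv (b : Module.Basis (Fin d) O A) (c : O) (n : ℕ) :
    (Fin n → A ⧸ Ideal.span {algebraMap O A c}) ≃ₗ[O]
      (Fin d → Fin n → O ⧸ Ideal.span ({c} : Set O)) :=
  (LinearEquiv.piCongrRight fun _ : Fin n => psiEquiv b c).trans
    (swapLinearEquiv n (O ⧸ Ideal.span ({c} : Set O)))

theorem PhiEquiv_apply (b : Module.Basis (Fin d) O A) (c : O) (n : ℕ)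
    (v : Fin n → A ⧸ Ideal.span {algebraMap O A c}) (j : Fin d) (i : Fin n) :
    PhiEquiv b c n v j i = psiEquiv b c (v i) j := rfl

theorem Phi_comm (b : Module.Basis (Fin d) O A) (c : O) (n : ℕ)
    (T : (Fin n → O) →ₗ[O] (Fin n → O))
    (v : Fin n → A ⧸ Ideal.span {algebraMap O A c}) (j : Fin d) :
    PhiEquiv b c n (baseChangeMap O (A ⧸ Ideal.span {algebraMap O A c}) n T v) j =
      baseChangeMap O (O ⧸ Ideal.span ({c} : Set O)) n T (PhiEquiv b c n v j) := by
  funext i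
  rw [PhiEquiv_apply]
  simp only [baseChangeMap, Matrix.toLin'_apply, Matrix.mulVec, dotProduct,
    Matrix.map_apply, PhiEquiv_apply, ← Algebra.smul_def]
  rw [map_sum]
  simp only [map_smul, Finset.sum_apply, Pi.smul_apply]

theorem ker_map_eq (b : Module.Basis (Fin d) O A) (c : O) (n : ℕ)
    (T : (Fin n → O) →ₗ[O] (Fin n → O)) :
    Submodule.map (PhiEquiv b c n).toLinearMap
        ((LinearMap.ker (baseChangeMap O (A ⧸ Ideal.span {algebraMap O A c}) n T)).restrictScalars
          O) =
      Submodule.pi Set.univ (fun _ : Fin d =>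
        (LinearMap.ker (baseChangeMap O (O ⧸ Ideal.span ({c} : Set O)) n T)).restrictScalars O) := by
  ext w
  simp only [Submodule.mem_map, Submodule.restrictScalars_mem, LinearMap.mem_ker,
    Submodule.mem_pi, Set.mem_univ, forall_true_left, LinearEquiv.coe_coe]
  constructor
  · rintro ⟨v, hv, rfl⟩ j
    have h := Phi_comm b c n T v j
    rw [hv] at h
    rw [← h]
    simp
  · intro hw
    refine ⟨(PhiEquiv b c n).symm w, ?_, (PhiEquiv b c n).apply_symm_apply w⟩
    apply (PhiEquiv b c n).injective
    rw [map_zero]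
    funext j
    rw [Phi_comm b c n T, (PhiEquiv b c n).apply_symm_apply]
    simpa using hw j

theorem range_map_eq (b : Module.Basis (Fin d) O A) (c : O) (n : ℕ)
    (T : (Fin n → O) →ₗ[O] (Fin n → O)) :
    Submodule.map (PhiEquiv b c n).toLinearMap
        ((LinearMap.range (baseChangeMap O (A ⧸ Ideal.span {algebraMap O A c}) n T)).restrictScalars
          O) =
      Submodule.pi Set.univ (fun _ : Fin d =>
        (LinearMap.range (baseChangeMap O (O ⧸ Ideal.span ({c} : Set O)) n T)).restrictScalars
          O) := by
  ext w
  simp only [Submodule.mem_map, Submodule.restrictScalars_mem, LinearMap.mem_range,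
    Submodule.mem_pi, Set.mem_univ, forall_true_left, LinearEquiv.coe_coe]
  constructor
  · rintro ⟨v, ⟨u, rfl⟩, rfl⟩ j
    exact ⟨PhiEquiv b c n u j, (Phi_comm b c n T u j).symm⟩
  · intro hw
    choose u hu using hw
    refine ⟨baseChangeMap O (A ⧸ Ideal.span {algebraMap O A c}) n T
      ((PhiEquiv b c n).symm u), ⟨(PhiEquiv b c n).symm u, rfl⟩, ?_⟩
    funext j
    rw [Phi_comm b c n T, (PhiEquiv b c n).apply_symm_apply]
    exact hu j

/-- Elements of a `pi` submodule are tuples of elements. -/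
def piSubtypeEquiv {R M : Type} [Ring R] [AddCommGroup M] [Module R M] (d : ℕ)
    (q : Fin d → Submodule R M) :
    (Submodule.pi Set.univ q : Submodule R (Fin d → M)) ≃ (∀ j, q j) where
  toFun x := fun j => ⟨x.1 j, x.2 j (Set.mem_univ j)⟩
  invFun g := ⟨fun j => g j, fun j _ => (g j).2⟩
  left_inv x := rfl
  right_inv g := rfl

theorem card_ker_pow (b : Module.Basis (Fin d) O A) (c : O) (n : ℕ)
    (T : (Fin n → O) →ₗ[O] (Fin n → O)) :
    Nat.card (LinearMap.ker (baseChangeMap O (A ⧸ Ideal.span {algebraMap O A c}) n T)) =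
      Nat.card (LinearMap.ker (baseChangeMap O (O ⧸ Ideal.span ({c} : Set O)) n T)) ^ d := by
  classical
  calc Nat.card (LinearMap.ker (baseChangeMap O (A ⧸ Ideal.span {algebraMap O A c}) n T))
      = Nat.card ((LinearMap.ker
          (baseChangeMap O (A ⧸ Ideal.span {algebraMap O A c}) n T)).restrictScalars O) :=
        Nat.card_congr (Submodule.restrictScalarsEquiv O _ _ _).toEquiv.symm
    _ = Nat.card (Submodule.map (PhiEquiv b c n).toLinearMap
          ((LinearMap.ker
            (baseChangeMap O (A ⧸ Ideal.span {algebraMap O A c}) n T)).restrictScalars O)) :=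
        Nat.card_congr (Submodule.equivMapOfInjective (PhiEquiv b c n).toLinearMap
          (PhiEquiv b c n).injective _).toEquiv
    _ = Nat.card (Submodule.pi Set.univ (fun _ : Fin d =>
          (LinearMap.ker (baseChangeMap O (O ⧸ Ideal.span ({c} : Set O)) n T)).restrictScalars
            O)) := by rw [ker_map_eq]
    _ = Nat.card (∀ _j : Fin d,
          ((LinearMap.ker (baseChangeMap O (O ⧸ Ideal.span ({c} : Set O)) n T)).restrictScalars
            O)) := Nat.card_congr (piSubtypeEquiv d _)
    _ = Nat.card ((LinearMap.ker
          (baseChangeMap O (O ⧸ Ideal.span ({c} : Set O)) n T)).restrictScalars O) ^ d := by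
        rw [Nat.card_pi, Finset.prod_const, Finset.card_univ, Fintype.card_fin]
    _ = Nat.card (LinearMap.ker (baseChangeMap O (O ⧸ Ideal.span ({c} : Set O)) n T)) ^ d := by
        rw [Nat.card_congr (Submodule.restrictScalarsEquiv O _ _ _).toEquiv]

theorem card_coker_pow (b : Module.Basis (Fin d) O A) (c : O) (n : ℕ)
    (T : (Fin n → O) →ₗ[O] (Fin n → O)) :
    Nat.card ((Fin n → A ⧸ Ideal.span {algebraMap O A c}) ⧸
        LinearMap.range (baseChangeMap O (A ⧸ Ideal.span {algebraMap O A c}) n T)) =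
      Nat.card ((Fin n → O ⧸ Ideal.span ({c} : Set O)) ⧸
        LinearMap.range (baseChangeMap O (O ⧸ Ideal.span ({c} : Set O)) n T)) ^ d := by
  classical
  calc Nat.card ((Fin n → A ⧸ Ideal.span {algebraMap O A c}) ⧸
        LinearMap.range (baseChangeMap O (A ⧸ Ideal.span {algebraMap O A c}) n T))
      = Nat.card ((Fin n → A ⧸ Ideal.span {algebraMap O A c}) ⧸
          (LinearMap.range
            (baseChangeMap O (A ⧸ Ideal.span {algebraMap O A c}) n T)).restrictScalars O) :=
        Nat.card_congr (Submodule.Quotient.restrictScalarsEquiv O _).toEquiv.symm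
    _ = Nat.card ((Fin d → Fin n → O ⧸ Ideal.span ({c} : Set O)) ⧸
          Submodule.pi Set.univ (fun _ : Fin d =>
            (LinearMap.range
              (baseChangeMap O (O ⧸ Ideal.span ({c} : Set O)) n T)).restrictScalars O)) :=
        Nat.card_congr (Submodule.Quotient.equiv _ _ (PhiEquiv b c n)
          (range_map_eq b c n T)).toEquiv
    _ = Nat.card (∀ _j : Fin d, (Fin n → O ⧸ Ideal.span ({c} : Set O)) ⧸
          (LinearMap.range
            (baseChangeMap O (O ⧸ Ideal.span ({c} : Set O)) n T)).restrictScalars O) :=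
        Nat.card_congr (Submodule.quotientPi _).toEquiv
    _ = Nat.card ((Fin n → O ⧸ Ideal.span ({c} : Set O)) ⧸
          (LinearMap.range
            (baseChangeMap O (O ⧸ Ideal.span ({c} : Set O)) n T)).restrictScalars O) ^ d := by
        rw [Nat.card_pi, Finset.prod_const, Finset.card_univ, Fintype.card_fin]
    _ = Nat.card ((Fin n → O ⧸ Ideal.span ({c} : Set O)) ⧸
          LinearMap.range (baseChangeMap O (O ⧸ Ideal.span ({c} : Set O)) n T)) ^ d := by
        rw [Nat.card_congr (Submodule.Quotient.restrictScalarsEquiv O _).toEquiv]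

end BaseChange2

/-- Let `O` be a DVR with uniformizer `π` and finite residue field, and `O'` a commutative
`O`-algebra which is free of rank `d ≥ 1` as an `O`-module. If `T : O^n → O^n` is an
injective `O`-linear map, then the kernel and cokernel of `T ⊗ O/π^r` are finite of
equal cardinality `N`, and the kernel and cokernel of `T ⊗ O'/π^r O'` are finite of
cardinality `N^d`. -/
theorem stmt_8 (O : Type) [CommRing O] [IsDomain O] [IsDiscreteValuationRing O]
    [Finite (IsLocalRing.ResidueField O)]
    (π : O) (hπ : Irreducible π)
    (O' : Type) [CommRing O'] [Algebra O O'] [Module.Free O O']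
    (d : ℕ) (hd : 1 ≤ d) (hrank : Module.finrank O O' = d)
    (r : ℕ) (hr : 1 ≤ r) (n : ℕ)
    (T : (Fin n → O) →ₗ[O] (Fin n → O)) (hT : Function.Injective T) :
    ∃ N : ℕ,
      Finite (LinearMap.ker (baseChangeMap O (O ⧸ Ideal.span {π ^ r}) n T)) ∧
      Finite ((Fin n → O ⧸ Ideal.span {π ^ r}) ⧸
        LinearMap.range (baseChangeMap O (O ⧸ Ideal.span {π ^ r}) n T)) ∧
      Nat.card (LinearMap.ker (baseChangeMap O (O ⧸ Ideal.span {π ^ r}) n T)) = N ∧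
      Nat.card ((Fin n → O ⧸ Ideal.span {π ^ r}) ⧸
        LinearMap.range (baseChangeMap O (O ⧸ Ideal.span {π ^ r}) n T)) = N ∧
      Finite (LinearMap.ker
        (baseChangeMap O (O' ⧸ Ideal.span {algebraMap O O' (π ^ r)}) n T)) ∧
      Finite ((Fin n → O' ⧸ Ideal.span {algebraMap O O' (π ^ r)}) ⧸
        LinearMap.range
          (baseChangeMap O (O' ⧸ Ideal.span {algebraMap O O' (π ^ r)}) n T)) ∧
      Nat.card (LinearMap.ker
        (baseChangeMap O (O' ⧸ Ideal.span {algebraMap O O' (π ^ r)}) n T)) = N ^ d ∧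
      Nat.card ((Fin n → O' ⧸ Ideal.span {algebraMap O O' (π ^ r)}) ⧸
        LinearMap.range
          (baseChangeMap O (O' ⧸ Ideal.span {algebraMap O O' (π ^ r)}) n T)) = N ^ d := by
  classical
  haveI : Module.Finite O O' := Module.finite_of_finrank_pos (by omega)
  let b : Module.Basis (Fin d) O O' := Module.finBasisOfFinrankEq O O' hrank
  haveI hRfin : Finite (O ⧸ Ideal.span ({π ^ r} : Set O)) := aux_finite_quot O π hπ r
  haveI hR'fin : Finite (O' ⧸ Ideal.span {algebraMap O O' (π ^ r)}) :=
    Finite.of_equiv _ (psiEquiv b (π ^ r)).symm.toEquiv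
  refine ⟨Nat.card (LinearMap.ker (baseChangeMap O (O ⧸ Ideal.span {π ^ r}) n T)),
    inferInstance, Quotient.finite _, rfl,
    (aux_card_ker_coker (baseChangeMap O (O ⧸ Ideal.span {π ^ r}) n T)).symm,
    inferInstance, Quotient.finite _,
    card_ker_pow b (π ^ r) n T, ?_⟩
  rw [card_coker_pow b (π ^ r) n T,
    ← aux_card_ker_coker (baseChangeMap O (O ⧸ Ideal.span {π ^ r}) n T)]
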